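/- Let ω = exp(2πi/3) ∈ ℂ and set x = (5 + 4ω²)/(5 + 4ω). Then: (i) 7x² + 2x + 7 = 0; (ii) |x| = 1; (iii) x is not integral over ℤ (its minimal polynomial over ℚ is x² + (2/7)x + 1, which is not monic with integer coefficients); and (iv) x is not a root of unity, i.e. x^m ≠ 1 for every integer m ≥ 1. -/

import Mathlib

/-- **A non-root-of-unity anomaly** (Example 3.11 of the paper).
For `ω = exp(2πi/3)` and `x = (5 + 4ω²)/(5 + 4ω)`: (i) `7x² + 2x + 7 = 0`;
(ii) `|x| = 1`; (iii) `x` is not integral over `ℤ`; and (iv) `x` is not a root of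
unity. -/
theorem anomaly_not_root_of_unity
    (ω x : ℂ)
    (hω : ω = Complex.exp (2 * (Real.pi : ℂ) * Complex.I / 3))
    (hx : x = (5 + 4 * ω ^ 2) / (5 + 4 * ω)) :
    7 * x ^ 2 + 2 * x + 7 = 0 ∧
    ‖x‖ = 1 ∧
    ¬ IsIntegral ℤ x ∧
    ∀ m : ℕ, 1 ≤ m → x ^ m ≠ 1 := by
  have hprim : IsPrimitiveRoot ω 3 := by
    rw [hω]; exact Complex.isPrimitiveRoot_exp 3 (by norm_num)
  have h1 : ω ^ 3 = 1 := hprim.pow_eq_one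
  have hωne : ω ≠ 0 := hprim.ne_zero (by norm_num)
  have h3 : ω ^ 2 + ω + 1 = 0 := by
    have hne : ω ≠ 1 := hprim.ne_one (by norm_num)
    have hfac : (ω - 1) * (ω ^ 2 + ω + 1) = 0 := by linear_combination h1
    rcases mul_eq_zero.mp hfac with h | h
    · exact absurd (sub_eq_zero.mp h) hne
    · exact h
  have hB : (5 + 4 * ω) ≠ 0 := by
    intro h
    have : (21 : ℂ) = 0 := by linear_combination 16 * h3 - (4 * ω - 1) * h
    norm_num at this
  have hA : (5 + 4 * ω ^ 2) ≠ 0 := by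
    intro h
    have : (21 : ℂ) / 16 = 0 := by
      linear_combination (-1/4 - ω) * h3 + (ω/4 + 5/16) * h
    norm_num at this
  have hquad : 7 * x ^ 2 + 2 * x + 7 = 0 := by
    rw [hx]
    field_simp
    linear_combination (112 * ω ^ 2 - 80 * ω + 400) * h3
  have habsω : ‖ω‖ = 1 := by
    rw [hω, Complex.norm_exp]
    norm_num
  have hnorm : Complex.normSq ω = 1 := by
    have := Complex.sq_norm ω
    rw [habsω] at this
    simpa using this.symm
  have hconjω : (starRingEnd ℂ) ω = ω ^ 2 := by
    apply mul_left_cancel₀ hωne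
    rw [Complex.mul_conj, hnorm]
    push_cast
    linear_combination -h1
  have hAconj : (5 + 4 * ω ^ 2) = (starRingEnd ℂ) (5 + 4 * ω) := by
    simp only [map_add, map_mul, hconjω, map_ofNat]
  have habs : ‖x‖ = 1 := by
    rw [hx, norm_div, hAconj, Complex.norm_conj]
    exact div_self (norm_ne_zero_iff.mpr hB)
  have hxne : x ≠ 0 := by rw [hx]; exact div_ne_zero hA hB
  have hconjx : (starRingEnd ℂ) x = x⁻¹ := by
    have hBconj : (starRingEnd ℂ) (5 + 4 * ω ^ 2) = 5 + 4 * ω := by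
      simp only [map_add, map_mul, map_pow, hconjω, map_ofNat]
      linear_combination 4 * ω * h1
    rw [hx, map_div₀, hBconj, ← hAconj, inv_div]
  have hsum : x + (starRingEnd ℂ) x = -2/7 := by
    rw [hconjx]
    field_simp
    linear_combination hquad
  have hnotint : ¬ IsIntegral ℤ x := by
    intro hint
    have hconjint : IsIntegral ℤ ((starRingEnd ℂ) x) :=
      hint.map (starRingEnd ℂ).toIntAlgHom
    have hsint : IsIntegral ℤ (x + (starRingEnd ℂ) x) := hint.add hconjint
    rw [hsum] at hsint
    have h27 : IsIntegral ℤ ((-2/7 : ℚ)) := by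
      have hcast : (algebraMap ℚ ℂ) (-2/7 : ℚ) = -2/7 := by
        push_cast
        norm_num
      rw [← isIntegral_algebraMap_iff (algebraMap ℚ ℂ).injective, hcast]
      exact hsint
    obtain ⟨y, hy⟩ := IsIntegrallyClosed.isIntegral_iff.mp h27
    have hyq : (y : ℚ) = -2/7 := hy
    have : (7 * y : ℤ) = -2 := by
      have h7 : (7 * y : ℚ) = -2 := by rw [hyq]; ring
      exact_mod_cast h7
    omega
  refine ⟨hquad, habs, hnotint, ?_⟩
  intro m hm hxm
  apply hnotint
  refine ⟨Polynomial.X ^ m - Polynomial.C 1, Polynomial.monic_X_pow_sub_C 1 (by omega), ?_⟩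
  simp [hxm]
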